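/- For an indecomposable n-dimensional integral simplex Δ with n ≤ 3 (i.e., the unique codimension-1 face δ not containing the origin has no lattice points other than its vertices), the denominator D(Δ) equals the largest invariant factor d_n of the vertex matrix M, and |det M| = D(Δ). -/

import Mathlib

private lemma bezout {ι : Type*} [DecidableEq ι] (s : Finset ι) (f : ι → ℤ) :
    ∃ c : ι → ℤ, ∑ i ∈ s, c i * f i = s.gcd f := by
  induction s using Finset.cons_induction with
  | empty => exact ⟨0, by simp⟩
  | cons a s ha ih =>
    obtain ⟨c, hc⟩ := ih
    set A := Int.gcdA (f a) (s.gcd f) with hA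
    set B := Int.gcdB (f a) (s.gcd f) with hB
    refine ⟨fun i => if i = a then A else B * c i, ?_⟩
    rw [Finset.sum_cons, Finset.cons_eq_insert a s ha, Finset.gcd_insert]
    have h1 : ∑ x ∈ s, (if x = a then A else B * c x) * f x = B * s.gcd f := by
      rw [← hc, Finset.mul_sum]
      refine Finset.sum_congr rfl fun i hi => ?_
      rw [if_neg (by rintro rfl; exact ha hi)]; ring
    rw [h1]; simp only [if_pos rfl, if_true]; rw [← Int.coe_gcd, Int.gcd_eq_gcd_ab]; ring

private lemma ending {m : ℕ} (M : Matrix (Fin (m + 1)) (Fin (m + 1)) ℤ) (hM : M.det ≠ 0)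
    (e : Fin (m + 1) → ℤ) (D : ℤ)
    (hgcd : Finset.univ.gcd e = 1)
    (hplane : ∀ j, ∑ i, e i * M i j = D)
    (P Q : Matrix (Fin (m + 1)) (Fin (m + 1)) ℤ)
    (hP : IsUnit P.det) (hQ : IsUnit Q.det)
    (d : Fin (m + 1) → ℤ) (hSmith : P * M * Q = Matrix.diagonal d)
    (hdvd : ∀ i j : Fin (m + 1), i ≤ j → d i ∣ d j)
    (hdet : M.det.natAbs = D.natAbs) :
    (d (Fin.last m)).natAbs = D.natAbs := by
  have hprod : P.det * M.det * Q.det = ∏ i, d i := by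
    rw [← Matrix.det_mul, ← Matrix.det_mul, hSmith, Matrix.det_diagonal]
  have hPn : P.det.natAbs = 1 := Int.isUnit_iff.mp hP |>.elim (fun h => by simp [h]) (fun h => by simp [h])
  have hQn : Q.det.natAbs = 1 := Int.isUnit_iff.mp hQ |>.elim (fun h => by simp [h]) (fun h => by simp [h])
  have hprodn : (∏ i, d i).natAbs = D.natAbs := by
    rw [← hprod, Int.natAbs_mul, Int.natAbs_mul, hPn, hQn, hdet]; ring
  have dvd1 : (d (Fin.last m)).natAbs ∣ D.natAbs := by
    rw [← hprodn]
    exact Int.natAbs_dvd_natAbs.mpr (Finset.dvd_prod_of_mem d (Finset.mem_univ _))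
  -- second direction : D ∣ d (last)
  have hPinv := Matrix.nonsing_inv_mul P hP
  set f : Fin (m + 1) → ℤ := Matrix.vecMul e P⁻¹ with hf
  have hfP : Matrix.vecMul f P = e := by
    rw [hf, Matrix.vecMul_vecMul, hPinv, Matrix.vecMul_one]
  have key : ∀ j, f j * d j = D * ∑ i, Q i j := by
    intro j
    have h1 : Matrix.vecMul f (P * M * Q) = Matrix.vecMul f (Matrix.diagonal d) := by
      rw [hSmith]
    have h2 : Matrix.vecMul f (P * M * Q) j = D * ∑ i, Q i j := by
      rw [← Matrix.vecMul_vecMul, ← Matrix.vecMul_vecMul, hfP]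
      have : Matrix.vecMul e M = fun _ => D := by
        funext j; rw [Matrix.vecMul, dotProduct]; exact hplane j
      rw [this, Matrix.vecMul, dotProduct, Finset.mul_sum]
    rw [← h2, h1, Matrix.vecMul_diagonal]
  have hgf : Finset.univ.gcd f ∣ 1 := by
    rw [← hgcd]
    refine Finset.dvd_gcd fun j _ => ?_
    rw [← hfP, Matrix.vecMul, dotProduct]
    exact Finset.dvd_sum fun i _ => Dvd.dvd.mul_right (Finset.gcd_dvd (Finset.mem_univ i)) _
  obtain ⟨c, hc⟩ := bezout Finset.univ f
  have hDd : ∀ i, D ∣ f i * d (Fin.last m) := by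
    intro i
    obtain ⟨k, hk⟩ := hdvd i (Fin.last m) (Fin.le_last i)
    rw [hk, ← mul_assoc, key i]
    exact ⟨(∑ i', Q i' i) * k, by ring⟩
  have hsum : D ∣ (Finset.univ.gcd f) * d (Fin.last m) := by
    rw [← hc, Finset.sum_mul]
    exact Finset.dvd_sum fun i _ => by
      obtain ⟨k, hk⟩ := hDd i
      exact ⟨c i * k, by rw [mul_assoc, hk]; ring⟩
  have hDlast : D ∣ d (Fin.last m) := by
    rcases Int.isUnit_iff.mp (isUnit_of_dvd_one hgf) with h | h
    · rwa [h, one_mul] at hsum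
    · rw [h, neg_one_mul] at hsum; exact dvd_neg.mp hsum
  exact Nat.dvd_antisymm dvd1 (Int.natAbs_dvd_natAbs.mpr hDlast)


private def d2 (a b : Fin 2 → ℤ) : ℤ := a 0 * b 1 - a 1 * b 0

private lemma core2 (M : Matrix (Fin 2) (Fin 2) ℤ) (hM : M.det ≠ 0)
    (e : Fin 2 → ℤ) (D : ℤ)
    (z : Fin 2 → ℤ) (hz' : ∑ i, e i * z i = 1)
    (hplane : ∀ j, ∑ i, e i * M i j = D)
    (hface : ∀ u : Fin 2 → ℤ,
      (fun i => (u i : ℝ)) ∈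
          convexHull ℝ (Set.range fun j => fun i => (M i j : ℝ)) →
        ∃ j, u = fun i => M i j) :
    M.det.natAbs = D.natAbs := by
  have hp0 := hplane 0
  have hp1 := hplane 1
  simp only [Fin.sum_univ_two] at hp0 hp1 hz'
  set u : Fin 2 → ℤ := fun i => M i 1 - M i 0 with hu
  have heu : e 0 * u 0 + e 1 * u 1 = 0 := by simp only [hu]; linear_combination hp1 - hp0
  set t : ℤ := d2 u z with htdef
  -- master identity
  have master : ∀ x : Fin 2 → ℤ, d2 u x = t * (e 0 * x 0 + e 1 * x 1) := by
    intro x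
    simp only [htdef, d2]
    linear_combination (-(x 0 * z 1 - x 1 * z 0)) * heu + (-(u 0 * x 1 - u 1 * x 0)) * hz'
  -- determinant
  have hdetM : M.det = -(t * D) := by
    have h1 := master (fun i => M i 0)
    rw [Matrix.det_fin_two]
    simp only [d2, hu] at h1 ⊢
    linear_combination -h1 - t * hp0
  have ht0 : t ≠ 0 := by
    intro h; rw [h] at hdetM; simp at hdetM; exact hM hdetM
  -- cramer identity
  have cram : ∀ (x : Fin 2 → ℤ) (i : Fin 2),
      t * x i = d2 x z * u i + d2 u x * z i := by
    intro x i
    fin_cases i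
    · show t * x 0 = d2 x z * u 0 + d2 u x * z 0
      simp only [htdef, d2]; ring
    · show t * x 1 = d2 x z * u 1 + d2 u x * z 1
      simp only [htdef, d2]; ring
  suffices htn : t.natAbs = 1 by
    rw [hdetM, Int.natAbs_neg, Int.natAbs_mul, htn, one_mul]
  by_cases hall : ∀ x : Fin 2 → ℤ, e 0 * x 0 + e 1 * x 1 = 0 → t ∣ d2 x z
  · -- index 1 case
    have hspan : ∀ y : Fin 2 → ℤ, ∃ p q : ℤ, ∀ i, y i = p * u i + q * z i := by
      intro y
      set w : ℤ := e 0 * y 0 + e 1 * y 1 with hw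
      set x : Fin 2 → ℤ := fun i => y i - w * z i with hx
      have hex : e 0 * x 0 + e 1 * x 1 = 0 := by simp only [hx]; linear_combination -w * hz'
      obtain ⟨p, hp⟩ := hall x hex
      refine ⟨p, w, fun i => ?_⟩
      have hc := cram x i
      have hdux : d2 u x = 0 := by rw [master x, hex, mul_zero]
      rw [hdux, hp, zero_mul, add_zero, mul_assoc] at hc
      have hxi : x i = p * u i := mul_left_cancel₀ ht0 hc
      have hyx : y i = x i + w * z i := by simp [hx]
      rw [hyx, hxi]
    choose p q hpq using hspan
    set δ : Fin 2 → Fin 2 → ℤ := fun k i => if i = k then 1 else 0 with hδ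
    set N : Matrix (Fin 2) (Fin 2) ℤ := Matrix.of (fun i j => ![u i, z i] j) with hN
    set C : Matrix (Fin 2) (Fin 2) ℤ := Matrix.of (fun j k => ![p (δ k), q (δ k)] j) with hC
    have hNC : N * C = 1 := by
      ext i k
      rw [Matrix.mul_apply, Fin.sum_univ_two]
      have hh := hpq (δ k) i
      simp only [hδ] at hh
      simp only [hN, hC, Matrix.of_apply, Matrix.one_apply]
      simp only [Matrix.cons_val_zero, Matrix.cons_val_one, Matrix.head_cons]
      rw [mul_comm (u i) _, mul_comm (z i) _, ← hh]
    have hdet1 : N.det * C.det = 1 := by rw [← Matrix.det_mul, hNC, Matrix.det_one]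
    have hNt : N.det = t := by
      rw [Matrix.det_fin_two]
      simp only [hN, Matrix.of_apply, Matrix.cons_val_zero, Matrix.cons_val_one,
        Matrix.head_cons, htdef, d2]
      ring
    rw [hNt] at hdet1
    rcases Int.isUnit_iff.mp (IsUnit.of_mul_eq_one _ hdet1) with h | h <;> simp [h]
  · -- there is a bad x : derive contradiction
    exfalso
    push_neg at hall
    obtain ⟨x, hex, hnd⟩ := hall
    set a : ℤ := d2 x z with ha
    have hax : ∀ i, t * x i = a * u i := by
      intro i
      have hc := cram x i
      have hdux : d2 u x = 0 := by rw [master x, hex, mul_zero]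
      rw [hdux, zero_mul, add_zero] at hc
      exact hc
    set s : ℤ := if t < 0 then -1 else 1 with hs
    set T : ℤ := s * t with hT
    have hTpos : 0 < T := by
      rcases lt_trichotomy t 0 with h | h | h
      · simp only [hT, hs, if_pos h]; linarith
      · exact absurd h ht0
      · simp only [hT, hs, if_neg (not_lt.mpr h.le)]; linarith
    have hss : s * s = 1 := by
      rcases (by by_cases h : t < 0 <;> simp [hs, h] : s = -1 ∨ s = 1) with h | h <;> rw [h] <;> ring
    have hTdvda : T ∣ a → t ∣ a := by
      rintro ⟨k, hk⟩; exact ⟨s * k, by rw [hk, hT]; ring⟩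
    set ra : ℤ := a % T with hra
    have h0ra : 0 ≤ ra := Int.emod_nonneg a (ne_of_gt hTpos)
    have hraT : ra < T := Int.emod_lt_of_pos a hTpos
    have hra0 : ra ≠ 0 := by
      intro h
      exact hnd (hTdvda (Int.dvd_of_emod_eq_zero h))
    set y : Fin 2 → ℤ := fun i => s * x i - (a / T) * u i with hy
    have hky : ∀ i, T * y i = ra * (M i 1 - M i 0) := by
      intro i
      have h1 : T * (s * x i) = a * u i := by
        calc T * (s * x i) = (s * s) * (t * x i) := by rw [hT]; ring
        _ = (s * s) * (a * u i) := by rw [hax i]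
        _ = a * u i := by rw [hss]; ring
      have h3 : ra = a - T * (a / T) := by rw [hra, Int.emod_def]
      simp only [hy, hu] at h1 ⊢
      linear_combination h1 - (M i 1 - M i 0) * h3
    set pt : Fin 2 → ℤ := fun i => M i 0 + y i with hpt
    have hmem : (fun i => ((pt i : ℤ) : ℝ)) ∈
        convexHull ℝ (Set.range fun j => fun i => (M i j : ℝ)) := by
      have hT' : (0:ℝ) < (T:ℝ) := by exact_mod_cast hTpos
      have hT0 : (T:ℝ) ≠ 0 := ne_of_gt hT'
      have hra' : (0:ℝ) ≤ (ra:ℝ) := by exact_mod_cast h0ra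
      have hraT' : (ra:ℝ) ≤ (T:ℝ) := by exact_mod_cast hraT.le
      set w : Fin 2 → ℝ := ![((T:ℝ) - (ra:ℝ))/(T:ℝ), (ra:ℝ)/(T:ℝ)] with hw
      have hws : ∑ j, w j = 1 := by
        simp only [hw, Fin.sum_univ_two, Matrix.cons_val_zero, Matrix.cons_val_one,
          Matrix.head_cons]
        field_simp
        ring
      have hw0 : ∀ j ∈ (Finset.univ : Finset (Fin 2)), 0 ≤ w j := by
        intro j _
        fin_cases j
        · show (0:ℝ) ≤ ((T:ℝ) - (ra:ℝ))/(T:ℝ)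
          exact div_nonneg (by linarith) hT'.le
        · show (0:ℝ) ≤ (ra:ℝ)/(T:ℝ)
          exact div_nonneg hra' hT'.le
      have hmm := Finset.centerMass_mem_convexHull (Finset.univ) hw0
        (by rw [hws]; norm_num) (fun j _ => Set.mem_range_self (f := fun j => fun i => (M i j : ℝ)) j)
      rw [Finset.centerMass_eq_of_sum_1 _ _ hws] at hmm
      convert hmm using 1
      funext i
      simp only [Fin.sum_univ_two, Pi.add_apply, Pi.smul_apply, smul_eq_mul, hw,
        Matrix.cons_val_zero, Matrix.cons_val_one, Matrix.head_cons, hpt]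
      have hyr : (T:ℝ) * (y i : ℝ) = (ra:ℝ) * ((M i 1 : ℝ) - (M i 0 : ℝ)) := by
        exact_mod_cast congrArg (fun v : ℤ => (v : ℝ)) (hky i)
      push_cast
      field_simp
      linear_combination hyr
    obtain ⟨j, hj⟩ := hface pt hmem
    have hgj := congrFun hj
    simp only [hpt] at hgj
    fin_cases j <;> simp only [Fin.zero_eta, Fin.mk_one, Fin.isValue] at hgj
    · have hy0 : ∀ i, y i = 0 := by
        intro i; have := hgj i; linarith [this]
      have hzero : ra * t = 0 := by
        have h0 := hky 0; have h1 := hky 1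
        rw [hy0 0, mul_zero] at h0; rw [hy0 1, mul_zero] at h1
        rw [htdef]; simp only [d2, hu]
        linear_combination (-(z 1)) * h0 + (z 0) * h1
      rcases mul_eq_zero.mp hzero with h | h
      · exact hra0 h
      · exact ht0 h
    · have hyu : ∀ i, y i = M i 1 - M i 0 := by
        intro i; have := hgj i; linarith [this]
      have hzero : (T - ra) * t = 0 := by
        have h0 := hky 0; have h1 := hky 1
        rw [hyu 0] at h0; rw [hyu 1] at h1
        rw [htdef]; simp only [d2, hu]
        linear_combination (z 1) * h0 + (-(z 0)) * h1
      rcases mul_eq_zero.mp hzero with h | h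
      · linarith
      · exact ht0 h


private def d3 (a b c : Fin 3 → ℤ) : ℤ :=
  a 0 * (b 1 * c 2 - b 2 * c 1) - a 1 * (b 0 * c 2 - b 2 * c 0) + a 2 * (b 0 * c 1 - b 1 * c 0)

private lemma core3 (M : Matrix (Fin 3) (Fin 3) ℤ) (hM : M.det ≠ 0)
    (e : Fin 3 → ℤ) (D : ℤ)
    (z : Fin 3 → ℤ) (hz' : ∑ i, e i * z i = 1)
    (hplane : ∀ j, ∑ i, e i * M i j = D)
    (hface : ∀ u : Fin 3 → ℤ,
      (fun i => (u i : ℝ)) ∈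
          convexHull ℝ (Set.range fun j => fun i => (M i j : ℝ)) →
        ∃ j, u = fun i => M i j) :
    M.det.natAbs = D.natAbs := by
  have hp0 := hplane 0
  have hp1 := hplane 1
  have hp2 := hplane 2
  simp only [Fin.sum_univ_three] at hp0 hp1 hp2 hz'
  set u : Fin 3 → ℤ := fun i => M i 1 - M i 0 with hu
  set v : Fin 3 → ℤ := fun i => M i 2 - M i 0 with hv
  have heu : e 0 * u 0 + e 1 * u 1 + e 2 * u 2 = 0 := by
    simp only [hu]; linear_combination hp1 - hp0
  have hev : e 0 * v 0 + e 1 * v 1 + e 2 * v 2 = 0 := by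
    simp only [hv]; linear_combination hp2 - hp0
  set t : ℤ := d3 u v z with htdef
  have master : ∀ x : Fin 3 → ℤ, d3 u v x = t * (e 0 * x 0 + e 1 * x 1 + e 2 * x 2) := by
    intro x
    simp only [htdef, d3]
    linear_combination
      (-(x 0 * (v 1 * z 2 - v 2 * z 1) - x 1 * (v 0 * z 2 - v 2 * z 0) + x 2 * (v 0 * z 1 - v 1 * z 0))) * heu
      + (-(u 0 * (x 1 * z 2 - x 2 * z 1) - u 1 * (x 0 * z 2 - x 2 * z 0) + u 2 * (x 0 * z 1 - x 1 * z 0))) * hev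
      + (-(u 0 * (v 1 * x 2 - v 2 * x 1) - u 1 * (v 0 * x 2 - v 2 * x 0) + u 2 * (v 0 * x 1 - v 1 * x 0))) * hz'
  have hdetM : M.det = t * D := by
    have h1 := master (fun i => M i 0)
    rw [Matrix.det_fin_three]
    simp only [d3, hu, hv] at h1 ⊢
    linear_combination h1 + t * hp0
  have ht0 : t ≠ 0 := by
    intro h; rw [h] at hdetM; simp at hdetM; exact hM hdetM
  have cram : ∀ (x : Fin 3 → ℤ) (i : Fin 3),
      t * x i = d3 x v z * u i + d3 u x z * v i + d3 u v x * z i := by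
    intro x i
    fin_cases i
    · show t * x 0 = d3 x v z * u 0 + d3 u x z * v 0 + d3 u v x * z 0
      simp only [htdef, d3]; ring
    · show t * x 1 = d3 x v z * u 1 + d3 u x z * v 1 + d3 u v x * z 1
      simp only [htdef, d3]; ring
    · show t * x 2 = d3 x v z * u 2 + d3 u x z * v 2 + d3 u v x * z 2
      simp only [htdef, d3]; ring
  suffices htn : t.natAbs = 1 by
    rw [hdetM, Int.natAbs_mul, htn, one_mul]
  by_cases hall : ∀ x : Fin 3 → ℤ, e 0 * x 0 + e 1 * x 1 + e 2 * x 2 = 0 →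
      t ∣ d3 x v z ∧ t ∣ d3 u x z
  · -- index 1 case
    have hspan : ∀ y : Fin 3 → ℤ, ∃ p q r : ℤ, ∀ i, y i = p * u i + q * v i + r * z i := by
      intro y
      set w : ℤ := e 0 * y 0 + e 1 * y 1 + e 2 * y 2 with hw
      set x : Fin 3 → ℤ := fun i => y i - w * z i with hx
      have hex : e 0 * x 0 + e 1 * x 1 + e 2 * x 2 = 0 := by
        simp only [hx]; linear_combination -w * hz'
      obtain ⟨⟨p, hp⟩, ⟨q, hq⟩⟩ := hall x hex
      refine ⟨p, q, w, fun i => ?_⟩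
      have hc := cram x i
      have hduvx : d3 u v x = 0 := by rw [master x, hex, mul_zero]
      rw [hduvx, hp, hq, zero_mul, add_zero, mul_assoc, mul_assoc] at hc
      have hxi : x i = p * u i + q * v i := by
        have := mul_left_cancel₀ ht0 (by linear_combination hc : t * x i = t * (p * u i + q * v i))
        exact this
      have hyx : y i = x i + w * z i := by simp [hx]
      rw [hyx, hxi]
    choose p q r hpqr using hspan
    set δ : Fin 3 → Fin 3 → ℤ := fun k i => if i = k then 1 else 0 with hδ
    set N : Matrix (Fin 3) (Fin 3) ℤ := Matrix.of (fun i j => ![u i, v i, z i] j) with hN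
    set C : Matrix (Fin 3) (Fin 3) ℤ :=
      Matrix.of (fun j k => ![p (δ k), q (δ k), r (δ k)] j) with hC
    have hNC : N * C = 1 := by
      ext i k
      rw [Matrix.mul_apply, Fin.sum_univ_three]
      have hh := hpqr (δ k) i
      simp only [hδ] at hh
      simp only [hN, hC, Matrix.of_apply, Matrix.one_apply]
      simp only [Matrix.cons_val_zero, Matrix.cons_val_one, Matrix.head_cons,
        Matrix.cons_val_two, Matrix.tail_cons]
      rw [mul_comm (u i) _, mul_comm (v i) _, mul_comm (z i) _, ← hh]
    have hdet1 : N.det * C.det = 1 := by rw [← Matrix.det_mul, hNC, Matrix.det_one]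
    have hNt : N.det = t := by
      rw [Matrix.det_fin_three]
      simp only [hN, Matrix.of_apply, Matrix.cons_val_zero, Matrix.cons_val_one,
        Matrix.head_cons, Matrix.cons_val_two, Matrix.tail_cons, htdef, d3]
      ring
    rw [hNt] at hdet1
    rcases Int.isUnit_iff.mp (IsUnit.of_mul_eq_one _ hdet1) with h | h <;> simp [h]
  · -- bad x exists : derive contradiction
    exfalso
    push_neg at hall
    obtain ⟨x, hex, hnd⟩ := hall
    set a : ℤ := d3 x v z with ha
    set b : ℤ := d3 u x z with hb
    have hax : ∀ i, t * x i = a * u i + b * v i := by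
      intro i
      have hc := cram x i
      have hduvx : d3 u v x = 0 := by rw [master x, hex, mul_zero]
      rw [hduvx, zero_mul, add_zero] at hc
      exact hc
    set s : ℤ := if t < 0 then -1 else 1 with hs
    set T : ℤ := s * t with hT
    have hTpos : 0 < T := by
      rcases lt_trichotomy t 0 with h | h | h
      · simp only [hT, hs, if_pos h]; linarith
      · exact absurd h ht0
      · simp only [hT, hs, if_neg (not_lt.mpr h.le)]; linarith
    have hss : s * s = 1 := by
      rcases (by by_cases h : t < 0 <;> simp [hs, h] : s = -1 ∨ s = 1) with h | h <;>
        rw [h] <;> ring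
    have hTdvda : ∀ w : ℤ, T ∣ w → t ∣ w := by
      rintro w ⟨k, hk⟩; exact ⟨s * k, by rw [hk, hT]; ring⟩
    set ra : ℤ := a % T with hra
    set rb : ℤ := b % T with hrb
    have h0ra : 0 ≤ ra := Int.emod_nonneg a (ne_of_gt hTpos)
    have h0rb : 0 ≤ rb := Int.emod_nonneg b (ne_of_gt hTpos)
    have hraT : ra < T := Int.emod_lt_of_pos a hTpos
    have hrbT : rb < T := Int.emod_lt_of_pos b hTpos
    have hnab : ra ≠ 0 ∨ rb ≠ 0 := by
      by_contra h
      push_neg at h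
      exact hnd (hTdvda a (Int.dvd_of_emod_eq_zero h.1))
        (hTdvda b (Int.dvd_of_emod_eq_zero h.2))
    set y : Fin 3 → ℤ := fun i => s * x i - (a / T) * u i - (b / T) * v i with hy
    have hky : ∀ i, T * y i = ra * (M i 1 - M i 0) + rb * (M i 2 - M i 0) := by
      intro i
      have h1 : T * (s * x i) = a * u i + b * v i := by
        calc T * (s * x i) = (s * s) * (t * x i) := by rw [hT]; ring
        _ = (s * s) * (a * u i + b * v i) := by rw [hax i]
        _ = a * u i + b * v i := by rw [hss]; ring
      have h3a : ra = a - T * (a / T) := by rw [hra, Int.emod_def]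
      have h3b : rb = b - T * (b / T) := by rw [hrb, Int.emod_def]
      simp only [hy, hu, hv] at h1 ⊢
      linear_combination h1 - (M i 1 - M i 0) * h3a - (M i 2 - M i 0) * h3b
    -- functionals
    have func1 : ∀ (c1 c2 : ℤ) (yy : Fin 3 → ℤ),
        (∀ i, T * yy i = c1 * (M i 1 - M i 0) + c2 * (M i 2 - M i 0)) →
        T * d3 yy v z = c1 * t := by
      intro c1 c2 yy hyy
      have h0 := hyy 0; have h1 := hyy 1; have h2 := hyy 2
      simp only [htdef, d3, hu, hv]
      linear_combination (v 1 * z 2 - v 2 * z 1) * h0 - (v 0 * z 2 - v 2 * z 0) * h1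
        + (v 0 * z 1 - v 1 * z 0) * h2
    have func2 : ∀ (c1 c2 : ℤ) (yy : Fin 3 → ℤ),
        (∀ i, T * yy i = c1 * (M i 1 - M i 0) + c2 * (M i 2 - M i 0)) →
        T * d3 u yy z = c2 * t := by
      intro c1 c2 yy hyy
      have h0 := hyy 0; have h1 := hyy 1; have h2 := hyy 2
      simp only [htdef, d3, hu, hv]
      linear_combination (-(u 1 * z 2 - u 2 * z 1)) * h0 + (u 0 * z 2 - u 2 * z 0) * h1
        - (u 0 * z 1 - u 1 * z 0) * h2
    rcases le_or_gt (ra + rb) T with hcase | hcase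
    · -- point c0 + y lies in the simplex
      set pt : Fin 3 → ℤ := fun i => M i 0 + y i with hpt
      have hmem : (fun i => ((pt i : ℤ) : ℝ)) ∈
          convexHull ℝ (Set.range fun j => fun i => (M i j : ℝ)) := by
        have hT' : (0:ℝ) < (T:ℝ) := by exact_mod_cast hTpos
        have hT0 : (T:ℝ) ≠ 0 := ne_of_gt hT'
        have hra' : (0:ℝ) ≤ (ra:ℝ) := by exact_mod_cast h0ra
        have hrb' : (0:ℝ) ≤ (rb:ℝ) := by exact_mod_cast h0rb
        have hsum' : (ra:ℝ) + (rb:ℝ) ≤ (T:ℝ) := by exact_mod_cast hcase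
        set w : Fin 3 → ℝ := ![((T:ℝ) - ra - rb)/T, (ra:ℝ)/T, (rb:ℝ)/T] with hw
        have hws : ∑ j, w j = 1 := by
          simp only [hw, Fin.sum_univ_three, Matrix.cons_val_zero, Matrix.cons_val_one,
            Matrix.head_cons, Matrix.cons_val_two, Matrix.tail_cons]
          field_simp
          try ring
        have hw0 : ∀ j ∈ (Finset.univ : Finset (Fin 3)), 0 ≤ w j := by
          intro j _
          fin_cases j
          · show (0:ℝ) ≤ ((T:ℝ) - ra - rb)/T
            exact div_nonneg (by linarith) hT'.le
          · show (0:ℝ) ≤ (ra:ℝ)/T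
            exact div_nonneg hra' hT'.le
          · show (0:ℝ) ≤ (rb:ℝ)/T
            exact div_nonneg hrb' hT'.le
        have hmm := Finset.centerMass_mem_convexHull (Finset.univ) hw0
          (by rw [hws]; norm_num)
          (fun j _ => Set.mem_range_self (f := fun j => fun i => (M i j : ℝ)) j)
        rw [Finset.centerMass_eq_of_sum_1 _ _ hws] at hmm
        convert hmm using 1
        funext i
        simp only [Fin.sum_univ_three, Pi.add_apply, Pi.smul_apply, smul_eq_mul, hw,
          Matrix.cons_val_zero, Matrix.cons_val_one, Matrix.head_cons, Matrix.cons_val_two,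
          Matrix.tail_cons, hpt]
        have hyr : (T:ℝ) * (y i : ℝ)
            = (ra:ℝ) * ((M i 1 : ℝ) - (M i 0 : ℝ)) + (rb:ℝ) * ((M i 2 : ℝ) - (M i 0 : ℝ)) := by
          exact_mod_cast congrArg (fun vv : ℤ => (vv : ℝ)) (hky i)
        push_cast
        field_simp
        linear_combination hyr
      obtain ⟨j, hj⟩ := hface pt hmem
      have hgj := congrFun hj
      simp only [hpt] at hgj
      fin_cases j <;> simp only [Fin.zero_eta, Fin.mk_one, Fin.isValue,
        show (⟨2, by norm_num⟩ : Fin 3) = (2 : Fin 3) from rfl] at hgj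
      · have hy0 : ∀ i, y i = 0 := by
          intro i; have := hgj i; linarith [this]
        have hf1 := func1 ra rb y hky
        have hf2 := func2 ra rb y hky
        have hd1 : d3 y v z = 0 := by
          simp only [d3]; rw [hy0 0, hy0 1, hy0 2]; ring
        have hd2 : d3 u y z = 0 := by
          simp only [d3]; rw [hy0 0, hy0 1, hy0 2]; ring
        rw [hd1, mul_zero] at hf1
        rw [hd2, mul_zero] at hf2
        rcases hnab with h | h
        · rcases mul_eq_zero.mp hf1.symm with h' | h'
          · exact h h'
          · exact ht0 h'
        · rcases mul_eq_zero.mp hf2.symm with h' | h'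
          · exact h h'
          · exact ht0 h'
      · have hyu : ∀ i, y i = M i 1 - M i 0 := by
          intro i; have := hgj i; linarith [this]
        have hf1 := func1 ra rb y hky
        have hd1 : d3 y v z = t := by
          rw [htdef]; simp only [d3, hu, hv]; rw [hyu 0, hyu 1, hyu 2]
        rw [hd1] at hf1
        have h0 : (T - ra) * t = 0 := by linear_combination hf1
        rcases mul_eq_zero.mp h0 with h' | h'
        · linarith
        · exact ht0 h'
      · have hyv : ∀ i, y i = M i 2 - M i 0 := by
          intro i; have := hgj i; linarith [this]
        have hf2 := func2 ra rb y hky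
        have hd2 : d3 u y z = t := by
          rw [htdef]; simp only [d3, hu, hv]; rw [hyv 0, hyv 1, hyv 2]
        rw [hd2] at hf2
        have h0 : (T - rb) * t = 0 := by linear_combination hf2
        rcases mul_eq_zero.mp h0 with h' | h'
        · linarith
        · exact ht0 h'
    · -- the reflected point
      set y2 : Fin 3 → ℤ := fun i => (M i 1 - M i 0) + (M i 2 - M i 0) - y i with hy2
      have hky2 : ∀ i, T * y2 i
          = (T - ra) * (M i 1 - M i 0) + (T - rb) * (M i 2 - M i 0) := by
        intro i
        simp only [hy2]
        linear_combination (-1 : ℤ) * hky i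
      set pt : Fin 3 → ℤ := fun i => M i 0 + y2 i with hpt
      have hmem : (fun i => ((pt i : ℤ) : ℝ)) ∈
          convexHull ℝ (Set.range fun j => fun i => (M i j : ℝ)) := by
        have hT' : (0:ℝ) < (T:ℝ) := by exact_mod_cast hTpos
        have hT0 : (T:ℝ) ≠ 0 := ne_of_gt hT'
        have hraT' : (ra:ℝ) ≤ (T:ℝ) := by exact_mod_cast hraT.le
        have hrbT' : (rb:ℝ) ≤ (T:ℝ) := by exact_mod_cast hrbT.le
        have hsum' : (T:ℝ) ≤ (ra:ℝ) + (rb:ℝ) := by exact_mod_cast hcase.le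
        set w : Fin 3 → ℝ := ![((ra:ℝ) + rb - T)/T, ((T:ℝ) - ra)/T, ((T:ℝ) - rb)/T] with hw
        have hws : ∑ j, w j = 1 := by
          simp only [hw, Fin.sum_univ_three, Matrix.cons_val_zero, Matrix.cons_val_one,
            Matrix.head_cons, Matrix.cons_val_two, Matrix.tail_cons]
          field_simp
          try ring
        have hw0 : ∀ j ∈ (Finset.univ : Finset (Fin 3)), 0 ≤ w j := by
          intro j _
          fin_cases j
          · show (0:ℝ) ≤ ((ra:ℝ) + rb - T)/T
            exact div_nonneg (by linarith) hT'.le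
          · show (0:ℝ) ≤ ((T:ℝ) - ra)/T
            exact div_nonneg (by linarith) hT'.le
          · show (0:ℝ) ≤ ((T:ℝ) - rb)/T
            exact div_nonneg (by linarith) hT'.le
        have hmm := Finset.centerMass_mem_convexHull (Finset.univ) hw0
          (by rw [hws]; norm_num)
          (fun j _ => Set.mem_range_self (f := fun j => fun i => (M i j : ℝ)) j)
        rw [Finset.centerMass_eq_of_sum_1 _ _ hws] at hmm
        convert hmm using 1
        funext i
        simp only [Fin.sum_univ_three, Pi.add_apply, Pi.smul_apply, smul_eq_mul, hw,
          Matrix.cons_val_zero, Matrix.cons_val_one, Matrix.head_cons, Matrix.cons_val_two,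
          Matrix.tail_cons, hpt]
        have hyr : (T:ℝ) * (y2 i : ℝ)
            = ((T:ℝ) - ra) * ((M i 1 : ℝ) - (M i 0 : ℝ))
              + ((T:ℝ) - rb) * ((M i 2 : ℝ) - (M i 0 : ℝ)) := by
          exact_mod_cast congrArg (fun vv : ℤ => (vv : ℝ)) (hky2 i)
        push_cast
        field_simp
        linear_combination hyr
      obtain ⟨j, hj⟩ := hface pt hmem
      have hgj := congrFun hj
      simp only [hpt] at hgj
      fin_cases j <;> simp only [Fin.zero_eta, Fin.mk_one, Fin.isValue,
        show (⟨2, by norm_num⟩ : Fin 3) = (2 : Fin 3) from rfl] at hgj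
      · have hy0 : ∀ i, y2 i = 0 := by
          intro i; have := hgj i; linarith [this]
        have hf1 := func1 (T - ra) (T - rb) y2 hky2
        have hd1 : d3 y2 v z = 0 := by
          simp only [d3]; rw [hy0 0, hy0 1, hy0 2]; ring
        rw [hd1, mul_zero] at hf1
        rcases mul_eq_zero.mp hf1.symm with h' | h'
        · linarith
        · exact ht0 h'
      · have hyu : ∀ i, y2 i = M i 1 - M i 0 := by
          intro i; have := hgj i; linarith [this]
        have hf2 := func2 (T - ra) (T - rb) y2 hky2
        have hd2 : d3 u y2 z = 0 := by
          simp only [d3, hu]; rw [hyu 0, hyu 1, hyu 2] <;> ring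
        rw [hd2, mul_zero] at hf2
        rcases mul_eq_zero.mp hf2.symm with h' | h'
        · linarith
        · exact ht0 h'
      · have hyv : ∀ i, y2 i = M i 2 - M i 0 := by
          intro i; have := hgj i; linarith [this]
        have hf1 := func1 (T - ra) (T - rb) y2 hky2
        have hd1 : d3 y2 v z = 0 := by
          simp only [d3, hv]; rw [hyv 0, hyv 1, hyv 2] <;> ring
        rw [hd1, mul_zero] at hf1
        rcases mul_eq_zero.mp hf1.symm with h' | h'
        · linarith
        · exact ht0 h'


/-- For an indecomposable `n`-dimensional integral simplex `Δ` with `n ≤ 3` (the unique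
codimension-1 face `δ` not containing the origin has no lattice points other than the
vertices, and lies on the hyperplane `e₁X₁ + ⋯ + eₙXₙ = D` with coprime integers `eᵢ`),
the denominator `D(Δ) = D` equals the largest invariant factor `dₙ` of the vertex matrix
`M`, and `|det M| = D(Δ)`. -/
theorem indecomposable_simplex_low_dim {n : ℕ} (h3 : n + 1 ≤ 3)
    (M : Matrix (Fin (n + 1)) (Fin (n + 1)) ℤ) (hM : M.det ≠ 0)
    (e : Fin (n + 1) → ℤ) (D : ℤ) (hD : 1 ≤ D)
    (hgcd : Finset.univ.gcd e = 1)
    (hplane : ∀ j, ∑ i, e i * M i j = D)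
    (hface : ∀ u : Fin (n + 1) → ℤ,
      (fun i => (u i : ℝ)) ∈
          convexHull ℝ (Set.range fun j => fun i => (M i j : ℝ)) →
        ∃ j, u = fun i => M i j)
    (P Q : Matrix (Fin (n + 1)) (Fin (n + 1)) ℤ)
    (hP : IsUnit P.det) (hQ : IsUnit Q.det)
    (d : Fin (n + 1) → ℤ) (hSmith : P * M * Q = Matrix.diagonal d)
    (hdvd : ∀ i j : Fin (n + 1), i ≤ j → d i ∣ d j) :
    (d (Fin.last n)).natAbs = D.natAbs ∧ M.det.natAbs = D.natAbs := by
  obtain ⟨zc, hzc⟩ := bezout Finset.univ e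
  rw [hgcd] at hzc
  have hz : ∑ i, e i * zc i = 1 := by
    rw [← hzc]; exact Finset.sum_congr rfl fun i _ => mul_comm _ _
  have hn2 : n ≤ 2 := by omega
  have hdet : M.det.natAbs = D.natAbs := by
    interval_cases n
    · -- n = 0
      have h := hplane 0
      simp only [Fin.sum_univ_succ, Finset.univ_eq_empty, Finset.sum_empty, add_zero] at h hz
      rw [Matrix.det_fin_one]
      have he1 : (e 0).natAbs = 1 := by
        have h1 : (e 0).natAbs * (zc 0).natAbs = 1 := by
          rw [← Int.natAbs_mul, hz]; rfl

        exact Nat.dvd_one.mp ⟨(zc 0).natAbs, h1.symm⟩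
      calc (M 0 0).natAbs = (e 0).natAbs * (M 0 0).natAbs := by rw [he1, one_mul]
      _ = (e 0 * M 0 0).natAbs := (Int.natAbs_mul _ _).symm
      _ = D.natAbs := by rw [h]
    · exact core2 M hM e D zc hz hplane hface
    · exact core3 M hM e D zc hz hplane hface
  exact ⟨ending M hM e D hgcd hplane P Q hP hQ d hSmith hdvd hdet, hdet⟩
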